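/- For every integer r ≥ 2, ∑_{ℓ=2}^{r} (−1)^ℓ ℓ² / ((r+ℓ)! (r−ℓ)!) = 1 / ((r−1)! (r+1)!). -/

import Mathlib

open scoped BigOperators

namespace PaperStmt

private def G (r ℓ : ℕ) : ℚ :=
  (-1) ^ (ℓ + 1) * (ℓ : ℚ) * ((ℓ : ℚ) - 1) /
    (2 * ((r : ℚ) - 1) * (Nat.factorial (r + ℓ - 1) : ℚ) * (Nat.factorial (r - ℓ) : ℚ))

private lemma step (r ℓ : ℕ) (hr : 2 ≤ r) (h2 : 2 ≤ ℓ) (hl : ℓ + 1 ≤ r) :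
    (-1 : ℚ) ^ ℓ * (ℓ : ℚ) ^ 2 / ((Nat.factorial (r + ℓ) : ℚ) * (Nat.factorial (r - ℓ) : ℚ))
      = G r (ℓ + 1) - G r ℓ := by
  unfold G
  set a := r + ℓ - 1 with ha_def
  set b := r - (ℓ + 1) with hb_def
  have h1 : r + ℓ = a + 1 := by omega
  have h2' : r + (ℓ + 1) - 1 = a + 1 := by omega
  have h3 : r - ℓ = b + 1 := by omega
  rw [h1, h2', h3, Nat.factorial_succ, Nat.factorial_succ]
  have ha : (a : ℚ) + 1 = (r : ℚ) + ℓ := by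
    have : a + 1 = r + ℓ := by omega
    exact_mod_cast congrArg (Nat.cast : ℕ → ℚ) this
  have hb : (b : ℚ) + 1 = (r : ℚ) - ℓ := by
    have : (b + 1) + ℓ = r := by omega
    have := congrArg (Nat.cast : ℕ → ℚ) this
    push_cast at this
    linarith
  have hfa : (Nat.factorial a : ℚ) ≠ 0 := by exact_mod_cast (Nat.factorial_pos a).ne'
  have hfb : (Nat.factorial b : ℚ) ≠ 0 := by exact_mod_cast (Nat.factorial_pos b).ne'
  have hra : (a : ℚ) + 1 ≠ 0 := by positivity
  have hrb : (b : ℚ) + 1 ≠ 0 := by positivity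
  have hr1 : (r : ℚ) - 1 ≠ 0 := by
    have : (2 : ℚ) ≤ (r : ℚ) := by exact_mod_cast hr
    linarith
  have hlq : (2 : ℚ) ≤ (ℓ : ℚ) := by exact_mod_cast h2
  have hra' : (r : ℚ) + ℓ ≠ 0 := by rw [← ha]; positivity
  have hrb' : (r : ℚ) - ℓ ≠ 0 := by rw [← hb]; positivity
  rw [pow_succ, pow_succ]
  push_cast
  rw [ha, hb]
  field_simp
  ring

private lemma last (r : ℕ) (hr : 2 ≤ r) :
    (-1 : ℚ) ^ r * (r : ℚ) ^ 2 / ((Nat.factorial (r + r) : ℚ) * (Nat.factorial (r - r) : ℚ))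
      + G r r = 0 := by
  unfold G
  set a := r + r - 1 with ha_def
  have h1 : r + r = a + 1 := by omega
  have h3 : r - r = 0 := by omega
  rw [h1, h3, Nat.factorial_succ, Nat.factorial_zero]
  have ha : (a : ℚ) + 1 = (r : ℚ) + r := by
    have : a + 1 = r + r := by omega
    exact_mod_cast congrArg (Nat.cast : ℕ → ℚ) this
  have hfa : (Nat.factorial a : ℚ) ≠ 0 := by exact_mod_cast (Nat.factorial_pos a).ne'
  have hra : (a : ℚ) + 1 ≠ 0 := by positivity
  have hr1 : (r : ℚ) - 1 ≠ 0 := by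
    have : (2 : ℚ) ≤ (r : ℚ) := by exact_mod_cast hr
    linarith
  have hrq : (2 : ℚ) ≤ (r : ℚ) := by exact_mod_cast hr
  have hra' : (r : ℚ) + r ≠ 0 := by rw [← ha]; positivity
  rw [pow_succ]
  push_cast
  rw [ha]
  field_simp
  ring

private lemma tel (r : ℕ) (hr : 2 ≤ r) :
    ∀ m, 1 ≤ m → m + 1 ≤ r →
      ∑ ℓ ∈ Finset.Icc 2 m,
          (-1 : ℚ) ^ ℓ * (ℓ : ℚ) ^ 2 /
            ((Nat.factorial (r + ℓ) : ℚ) * (Nat.factorial (r - ℓ) : ℚ))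
        = G r (m + 1) - G r 2 := by
  intro m h1 h2
  induction m with
  | zero => omega
  | succ n ih =>
    rcases Nat.eq_or_lt_of_le h1 with h | h
    · have hn : n = 0 := by omega
      subst hn
      rw [show Finset.Icc 2 1 = ∅ by rfl, Finset.sum_empty]
      ring
    · have hn1 : 1 ≤ n := by omega
      have hn2 : n + 1 ≤ r := by omega
      rw [show n + 1 = n + 1 from rfl, Finset.sum_Icc_succ_top (by omega : 2 ≤ n + 1),
        ih hn1 hn2, step r (n + 1) hr (by omega) (by omega)]
      ring

/-- For `r ≥ 2`, `∑_{ℓ=2}^{r} (-1)^ℓ ℓ² / ((r+ℓ)!(r-ℓ)!) = 1/((r-1)!(r+1)!)`. -/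
theorem stmt8 (r : ℕ) (hr : 2 ≤ r) :
    ∑ ℓ ∈ Finset.Icc 2 r,
        (-1 : ℚ) ^ ℓ * (ℓ : ℚ) ^ 2 / ((Nat.factorial (r + ℓ) : ℚ) * (Nat.factorial (r - ℓ) : ℚ))
      = 1 / ((Nat.factorial (r - 1) : ℚ) * (Nat.factorial (r + 1) : ℚ)) := by
  have hrw : r = (r - 1) + 1 := by omega
  rw [hrw, Finset.sum_Icc_succ_top (by omega : 2 ≤ (r - 1) + 1), ← hrw,
    tel r hr (r - 1) (by omega) (by omega), ← hrw]
  have hlast := last r hr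
  have key : ∑' (x : Empty), (0:ℚ) = 0 := by simp
  -- sum = (G r r - G r 2) + t r = -G r 2
  have : G r r - G r 2 +
      (-1 : ℚ) ^ r * (r : ℚ) ^ 2 / ((Nat.factorial (r + r) : ℚ) * (Nat.factorial (r - r) : ℚ))
      = - G r 2 := by linarith
  rw [this]
  unfold G
  have h1 : r + 2 - 1 = r + 1 := by omega
  have h2 : r - 1 = (r - 2) + 1 := by omega
  rw [h1, h2, Nat.factorial_succ]
  have hb : ((r - 2 : ℕ) : ℚ) + 1 = (r : ℚ) - 1 := by
    have : (r - 2) + 1 + 1 = r := by omega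
    have := congrArg (Nat.cast : ℕ → ℚ) this
    push_cast at this
    linarith
  have hfa : (Nat.factorial (r + 1) : ℚ) ≠ 0 := by exact_mod_cast (Nat.factorial_pos _).ne'
  have hfb : (Nat.factorial (r - 2) : ℚ) ≠ 0 := by exact_mod_cast (Nat.factorial_pos _).ne'
  have hr1 : (r : ℚ) - 1 ≠ 0 := by
    have : (2 : ℚ) ≤ (r : ℚ) := by exact_mod_cast hr
    linarith
  have hb1 : ((r - 2 : ℕ) : ℚ) + 1 ≠ 0 := by positivity
  have h4 : ((Nat.factorial (r - 2 + 1) : ℕ) : ℚ) = (((r - 2 : ℕ) : ℚ) + 1) * (Nat.factorial (r - 2) : ℚ) := by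
    rw [Nat.factorial_succ]; push_cast; ring
  push_cast [h4]
  rw [hb]
  field_simp
  ring

end PaperStmt
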